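/- Let X be a Banach space and C ⊆ X a rotund weakly compact convex set. Then for every x ∈ X there exists a unique point z ∈ C with ‖x − z‖ = d(x, C), i.e. the metric projection onto C is single-valued. -/

import Mathlib

open Metric Set

lemma weakSpace_t2 {X : Type*} [NormedAddCommGroup X] [NormedSpace ℝ X] :
    T2Space (WeakSpace ℝ X) := by
  refine (WeakBilin.isEmbedding (B := (topDualPairing ℝ X).flip) ?_).t2Space
  intro a b hab
  rw [← sub_eq_zero]
  apply NormedSpace.eq_zero_of_forall_dual_eq_zero ℝ
  intro f
  have : (topDualPairing ℝ X).flip a f = (topDualPairing ℝ X).flip b f := by rw [hab]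
  simp only [LinearMap.flip_apply, topDualPairing_apply] at this
  simp [map_sub, this]

lemma closed_weak_image {X : Type*} [NormedAddCommGroup X] [NormedSpace ℝ X]
    {s : Set X} (hs : Convex ℝ s) (hcl : IsClosed s) :
    IsClosed (toWeakSpace ℝ X '' s : Set (WeakSpace ℝ X)) := by
  have h := hs.toWeakSpace_closure (𝕜 := ℝ)
  rw [hcl.closure_eq] at h
  exact h ▸ isClosed_closure

/-- A convex set `C` is rotund if every hyperplane supporting `C` at a point `z ∈ C` meets
`C` only in `z`. -/
def Rotund {X : Type*} [NormedAddCommGroup X] [NormedSpace ℝ X] (C : Set X) : Prop :=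
  ∀ z ∈ C, ∀ f : X →L[ℝ] ℝ, f ≠ 0 → ∀ r : ℝ, f z = r →
    ((∀ x ∈ C, f x ≤ r) ∨ (∀ x ∈ C, r ≤ f x)) → {x ∈ C | f x = r} = {z}

/-- For a nonempty rotund weakly compact convex set `C` in a Banach space and any `x ∈ X`
there is a unique point of `C` nearest to `x`. -/
theorem rotund_unique_nearest {X : Type*} [NormedAddCommGroup X] [NormedSpace ℝ X]
    [CompleteSpace X] (C : Set X) (hCne : C.Nonempty) (hCco : Convex ℝ C)
    (hCwc : IsCompact (toWeakSpace ℝ X '' C : Set (WeakSpace ℝ X)))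
    (hCrot : Rotund C) (x : X) :
    ∃! z, z ∈ C ∧ ‖x - z‖ = infDist x C := by
  haveI : T2Space (WeakSpace ℝ X) := weakSpace_t2
  set d := infDist x C with hd
  have hfun : ⇑(toWeakSpaceCLM ℝ X) = ⇑(toWeakSpace ℝ X) := funext fun y =>
    toWeakSpaceCLM_eq_toWeakSpace ℝ X y
  -- C is norm-closed
  have hCcl : IsClosed C := by
    have h1 : IsClosed (toWeakSpace ℝ X '' C : Set (WeakSpace ℝ X)) := hCwc.isClosed
    have h2 := h1.preimage (toWeakSpaceCLM ℝ X).continuous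
    rwa [hfun, Set.preimage_image_eq C (toWeakSpace ℝ X).injective] at h2
  -- Existence
  have hEx : ∃ z ∈ C, ‖x - z‖ = d := by
    set D : ℕ → Set X := fun n => C ∩ closedBall x (d + 1 / (n + 1)) with hD
    have hDsub : ∀ n, D (n + 1) ⊆ D n := by
      intro n
      apply Set.inter_subset_inter_right
      apply closedBall_subset_closedBall
      have : (1 : ℝ) / (n + 1 + 1) ≤ 1 / (n + 1) := by
        apply one_div_le_one_div_of_le <;> push_cast <;> linarith
      push_cast
      linarith
    have hDne : ∀ n, (D n).Nonempty := by
      intro n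
      have hpos : (0 : ℝ) < 1 / (n + 1) := by positivity
      obtain ⟨z, hzC, hz⟩ := (infDist_lt_iff hCne).mp
        (by linarith : infDist x C < d + 1 / (n + 1))
      exact ⟨z, hzC, by rw [mem_closedBall, dist_comm]; exact hz.le⟩
    have hDconv : ∀ n, Convex ℝ (D n) := fun n => hCco.inter (convex_closedBall x _)
    have hDcl : ∀ n, IsClosed (D n) := fun n => hCcl.inter isClosed_closedBall
    set W : ℕ → Set (WeakSpace ℝ X) := fun n => toWeakSpace ℝ X '' D n with hW
    have hWcl : ∀ n, IsClosed (W n) := fun n => closed_weak_image (hDconv n) (hDcl n)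
    have hW0 : IsCompact (W 0) :=
      hCwc.of_isClosed_subset (hWcl 0) (Set.image_mono Set.inter_subset_left)
    have hne := IsCompact.nonempty_iInter_of_sequence_nonempty_isCompact_isClosed W
      (fun n => Set.image_mono (hDsub n)) (fun n => (hDne n).image _) hW0 hWcl
    obtain ⟨w, hw⟩ := hne
    obtain ⟨z, hz0, hzw⟩ := Set.mem_iInter.mp hw 0
    have hzDn : ∀ n, z ∈ D n := by
      intro n
      obtain ⟨z', hz', hz'w⟩ := Set.mem_iInter.mp hw n
      rwa [show z' = z from (toWeakSpace ℝ X).injective (by rw [hzw, hz'w])] at hz'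
    refine ⟨z, hz0.1, ?_⟩
    rw [← dist_eq_norm]
    refine le_antisymm (le_of_forall_pos_le_add fun ε hε => ?_) (infDist_le_dist_of_mem hz0.1)
    obtain ⟨n, hn⟩ := exists_nat_one_div_lt hε
    have := (hzDn n).2
    rw [mem_closedBall, dist_comm] at this
    push_cast at this hn
    linarith
  -- Uniqueness
  have key : ∀ z₁ z₂, z₁ ∈ C → z₂ ∈ C → ‖x - z₁‖ = d → ‖x - z₂‖ = d → z₁ = z₂ := by
    intro z₁ z₂ h₁C h₂C h₁ h₂
    rcases eq_or_lt_of_le (infDist_nonneg : (0 : ℝ) ≤ d) with hd0 | hdpos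
    · have e₁ : x - z₁ = 0 := norm_eq_zero.mp (h₁.trans hd0.symm)
      have e₂ : x - z₂ = 0 := norm_eq_zero.mp (h₂.trans hd0.symm)
      rw [(sub_eq_zero.mp e₁).symm, (sub_eq_zero.mp e₂).symm]
    · have hdisj : Disjoint (ball x d) C := by
        rw [Set.disjoint_left]
        intro a ha haC
        rw [mem_ball] at ha
        have := infDist_le_dist_of_mem (x := x) haC
        rw [dist_comm] at ha
        linarith
      obtain ⟨f, u, hf1, hf2⟩ :=
        geometric_hahn_banach_open (convex_ball x d) isOpen_ball hCco hdisj
      have hfx : f x < u := hf1 x (mem_ball_self hdpos)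
      have hf0 : f ≠ 0 := by
        rintro rfl
        obtain ⟨c, hc⟩ := hCne
        have h1 := hf2 c hc
        simp only [ContinuousLinearMap.zero_apply] at h1 hfx
        linarith
      have hM : ∀ z ∈ C, ‖x - z‖ = d → f z = u := by
        intro z hzC hz
        refine le_antisymm ?_ (hf2 z hzC)
        by_contra hlt
        push_neg at hlt
        have ha : 0 < f z - f x := by linarith
        have hdiv : (u - f x) / (f z - f x) < 1 := (div_lt_one ha).mpr (by linarith)
        obtain ⟨t, ht1, ht2⟩ := exists_between hdiv
        have ht0 : 0 < t := lt_trans (div_pos (by linarith) ha) ht1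
        have hmem : x + t • (z - x) ∈ ball x d := by
          rw [mem_ball, dist_eq_norm, add_sub_cancel_left, norm_smul, Real.norm_eq_abs,
            abs_of_pos ht0, norm_sub_rev, hz]
          exact mul_lt_of_lt_one_left hdpos ht2
        have hlt2 := hf1 _ hmem
        simp only [map_add, map_smul, map_sub, smul_eq_mul] at hlt2
        have := (div_lt_iff₀ ha).mp ht1
        nlinarith
      have h1u := hM z₁ h₁C h₁
      have h2u := hM z₂ h₂C h₂
      have heq := hCrot z₁ h₁C f hf0 u h1u (Or.inr hf2)
      have hz2 : z₂ ∈ ({x ∈ C | f x = u} : Set X) := ⟨h₂C, h2u⟩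
      rw [heq] at hz2
      exact hz2.symm
  obtain ⟨z, hzC, hzd⟩ := hEx
  exact ⟨z, ⟨hzC, hzd⟩, fun y hy => key y z hy.1 hzC hy.2 hzd⟩
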